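/- The line digraph of the subKautz digraph sK(d,ℓ−1) is isomorphic to the cyclic Kautz digraph CK(d,ℓ): the map sending an arc (x₁…x_{ℓ−1}, x₂…x_ℓ) of sK(d,ℓ−1) to the sequence x₁x₂…x_ℓ is a digraph isomorphism from L(sK(d,ℓ−1)) to CK(d,ℓ). -/
import Mathlib


/-- Consecutive entries are distinct (Kautz/subKautz vertex condition). -/
abbrev consecNe {m n : ℕ} (x : Fin m → Fin n) : Prop :=
  ∀ i j : Fin m, j.val = i.val + 1 → x i ≠ x j

/-- First entry distinct from last entry (cyclic Kautz vertex condition). -/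
abbrev firstNeLast {m n : ℕ} (x : Fin m → Fin n) : Prop :=
  ∀ i j : Fin m, i.val = 0 → j.val = m - 1 → x i ≠ x j

/-- Adjacency in the subKautz digraph: `y` is the left shift of `x` with a new last
symbol distinct from the first and last symbols of `x`. -/
abbrev sKAdj {m n : ℕ} (x y : Fin m → Fin n) : Prop :=
  (∀ i j : Fin m, j.val = i.val + 1 → y i = x j) ∧
  (∀ i j : Fin m, i.val = m - 1 → j.val = 0 → y i ≠ x j) ∧
  (∀ i : Fin m, i.val = m - 1 → y i ≠ x i)

/-- Adjacency in the cyclic Kautz digraph: `y` is the left shift of `x` with a new last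
symbol distinct from the second and last symbols of `x`. -/
abbrev ckAdj {m n : ℕ} (x y : Fin m → Fin n) : Prop :=
  (∀ i j : Fin m, j.val = i.val + 1 → y i = x j) ∧
  (∀ i j : Fin m, i.val = m - 1 → j.val = 1 → y i ≠ x j) ∧
  (∀ i : Fin m, i.val = m - 1 → y i ≠ x i)

/-- The map sending an arc `(x₁…x_{ℓ-1}, x₂…x_ℓ)` of the subKautz digraph `sK(d,ℓ-1)`
to the sequence `x₁x₂…x_ℓ` is a digraph isomorphism from the line digraph
`L(sK(d,ℓ-1))` onto the cyclic Kautz digraph `CK(d,ℓ)`: it is a bijection from the arc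
set of `sK(d,ℓ-1)` onto the vertex set of `CK(d,ℓ)`, and arcs `a`, `b` of `sK(d,ℓ-1)`
are adjacent in the line digraph (head of `a` = tail of `b`) iff their images are
adjacent in `CK(d,ℓ)`. -/
theorem stmt5 (d ℓ : ℕ) (hd : 2 ≤ d) (hℓ : 3 ≤ ℓ) :
    Set.BijOn
      (fun p : (Fin (ℓ - 1) → Fin (d + 1)) × (Fin (ℓ - 1) → Fin (d + 1)) =>
        fun i : Fin ℓ =>
          if h : i.val < ℓ - 1 then p.1 ⟨i.val, h⟩ else p.2 ⟨ℓ - 2, by omega⟩)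
      {p | consecNe p.1 ∧ consecNe p.2 ∧ sKAdj p.1 p.2}
      {z : Fin ℓ → Fin (d + 1) | consecNe z ∧ firstNeLast z} ∧
    ∀ p q : (Fin (ℓ - 1) → Fin (d + 1)) × (Fin (ℓ - 1) → Fin (d + 1)),
      (consecNe p.1 ∧ consecNe p.2 ∧ sKAdj p.1 p.2) →
      (consecNe q.1 ∧ consecNe q.2 ∧ sKAdj q.1 q.2) →
      (p.2 = q.1 ↔
        ckAdj
          (fun i : Fin ℓ =>
            if h : i.val < ℓ - 1 then p.1 ⟨i.val, h⟩ else p.2 ⟨ℓ - 2, by omega⟩)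
          (fun i : Fin ℓ =>
            if h : i.val < ℓ - 1 then q.1 ⟨i.val, h⟩ else q.2 ⟨ℓ - 2, by omega⟩)) := by

  have h21 : ℓ - 2 < ℓ - 1 := by omega
  constructor
  · refine ⟨?_, ?_, ?_⟩
    · -- MapsTo
      rintro ⟨x, y⟩ ⟨hx, hy, hshift, hne0, hnelast⟩
      dsimp only at hx hy hshift hne0 hnelast ⊢
      refine ⟨?_, ?_⟩
      · intro i j hij
        dsimp only
        by_cases hj : j.val < ℓ - 1
        · have hi : i.val < ℓ - 1 := by omega
          rw [dif_pos hi, dif_pos hj]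
          exact hx ⟨i, hi⟩ ⟨j, hj⟩ hij
        · have hi : i.val < ℓ - 1 := by omega
          rw [dif_pos hi, dif_neg hj]
          have h := hnelast ⟨ℓ - 2, by omega⟩ (show ℓ - 2 = ℓ - 1 - 1 by omega)
          have hix : (⟨i.val, hi⟩ : Fin (ℓ - 1)) = ⟨ℓ - 2, by omega⟩ :=
            Fin.ext (show i.val = ℓ - 2 by omega)
          rw [hix]
          exact fun he => h he.symm
      · intro i j hi hj
        dsimp only
        rw [dif_pos (show i.val < ℓ - 1 by omega), dif_neg (show ¬ j.val < ℓ - 1 by omega)]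
        have h := hne0 ⟨ℓ - 2, by omega⟩ ⟨0, by omega⟩ (show ℓ - 2 = ℓ - 1 - 1 by omega) rfl
        have hix : (⟨i.val, show i.val < ℓ - 1 by omega⟩ : Fin (ℓ - 1)) = ⟨0, by omega⟩ :=
          Fin.ext (show i.val = 0 by omega)
        rw [hix]
        exact fun he => h he.symm
    · -- InjOn
      rintro ⟨x, y⟩ ⟨hx, hy, hshift, hne0, hnelast⟩ ⟨x', y'⟩
        ⟨hx', hy', hshift', hne0', hnelast'⟩ h
      dsimp only at hshift hshift' h
      have hx1 : x = x' := by
        funext i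
        have := congrFun h ⟨i.val, by omega⟩
        dsimp only at this
        rw [dif_pos (show i.val < ℓ - 1 from i.isLt), dif_pos (show i.val < ℓ - 1 from i.isLt)]
          at this
        simpa using this
      have hlast : y ⟨ℓ - 2, by omega⟩ = y' ⟨ℓ - 2, by omega⟩ := by
        have := congrFun h ⟨ℓ - 1, by omega⟩
        dsimp only at this
        rwa [dif_neg (show ¬ ℓ - 1 < ℓ - 1 by omega), dif_neg (show ¬ ℓ - 1 < ℓ - 1 by omega)]
          at this
      refine Prod.ext hx1 ?_
      funext i
      show y i = y' i
      by_cases hi : i.val < ℓ - 2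
      · have h1 := hshift i ⟨i.val + 1, by omega⟩ rfl
        have h2 := hshift' i ⟨i.val + 1, by omega⟩ rfl
        rw [h1, h2, hx1]
      · have hie : i = ⟨ℓ - 2, by omega⟩ := Fin.ext (show i.val = ℓ - 2 by omega)
        rw [hie]; exact hlast
    · -- SurjOn
      rintro z ⟨hz, hfl⟩
      refine ⟨(fun i => z ⟨i.val, by omega⟩, fun i => z ⟨i.val + 1, by omega⟩),
        ⟨?_, ?_, ?_, ?_, ?_⟩, ?_⟩
      · intro i j hij
        exact hz ⟨i.val, by omega⟩ ⟨j.val, by omega⟩ hij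
      · intro i j hij
        exact hz ⟨i.val + 1, by omega⟩ ⟨j.val + 1, by omega⟩ (show j.val + 1 = i.val + 1 + 1 by omega)
      · intro i j hij
        dsimp only
        exact congrArg z (Fin.ext (show i.val + 1 = j.val by omega))
      · intro i j hi hj
        dsimp only
        have := hfl ⟨j.val, by omega⟩ ⟨i.val + 1, by omega⟩ hj (show i.val + 1 = ℓ - 1 by omega)
        exact fun he => this he.symm
      · intro i hi
        dsimp only
        exact fun he => hz ⟨i.val, by omega⟩ ⟨i.val + 1, by omega⟩ rfl he.symm
      · funext i
        dsimp only
        by_cases hi : i.val < ℓ - 1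
        · rw [dif_pos hi]
        · rw [dif_neg hi]
          exact congrArg z (Fin.ext (show ℓ - 2 + 1 = i.val by omega))
  · -- second part
    rintro ⟨x, y⟩ ⟨u, v⟩ ⟨hx, hy, hshift, hne0, hnelast⟩ ⟨hu, hv, hshift', hne0', hnelast'⟩
    dsimp only at hx hy hshift hne0 hnelast hu hv hshift' hne0' hnelast' ⊢
    constructor
    · rintro rfl
      refine ⟨?_, ?_, ?_⟩
      · intro i j hij
        dsimp only
        have hi : i.val < ℓ - 1 := by omega
        rw [dif_pos hi]
        by_cases hj : j.val < ℓ - 1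
        · rw [dif_pos hj]
          exact hshift ⟨i.val, hi⟩ ⟨j.val, hj⟩ hij
        · rw [dif_neg hj]
          have hkey : i.val = ℓ - 2 := by omega
          exact congrArg y (Fin.ext hkey)
      · intro i j hi hj
        dsimp only
        rw [dif_neg (show ¬ i.val < ℓ - 1 by omega), dif_pos (show j.val < ℓ - 1 by omega)]
        have h1 := hne0' ⟨ℓ - 2, by omega⟩ ⟨0, by omega⟩ (show ℓ - 2 = ℓ - 1 - 1 by omega) rfl
        have h2 := hshift ⟨0, by omega⟩ ⟨1, by omega⟩ rfl
        have hjx : (⟨j.val, show j.val < ℓ - 1 by omega⟩ : Fin (ℓ - 1)) = ⟨1, by omega⟩ :=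
          Fin.ext (show j.val = 1 by omega)
        rw [hjx, ← h2]
        exact h1
      · intro i hi
        dsimp only
        rw [dif_neg (show ¬ i.val < ℓ - 1 by omega), dif_neg (show ¬ i.val < ℓ - 1 by omega)]
        exact hnelast' ⟨ℓ - 2, by omega⟩ (show ℓ - 2 = ℓ - 1 - 1 by omega)
    · rintro ⟨hsh, -, -⟩
      funext i
      have h := hsh ⟨i.val, by omega⟩ ⟨i.val + 1, by omega⟩ rfl
      dsimp only at h
      rw [dif_pos (show i.val < ℓ - 1 from i.isLt)] at h
      by_cases hi : i.val + 1 < ℓ - 1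
      · rw [dif_pos hi] at h
        have h2 := hshift i ⟨i.val + 1, hi⟩ rfl
        exact h2.trans (h.symm.trans (congrArg u (Fin.ext rfl)))
      · rw [dif_neg hi] at h
        have hie : i = ⟨ℓ - 2, by omega⟩ := Fin.ext (show i.val = ℓ - 2 by omega)
        exact (congrArg y hie).trans (h.symm.trans (congrArg u (Fin.ext rfl)))
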